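/- For every integer n, letting α = 3 + (9*n + 5)/(3*(2*n + 1)*(9*n + 4)), the Möbius transformation given by the matrix B_α * A^{-1} * B_α^{2n+1} * A^{-3(9n+4)(9n+5)} sends 0 to 1/2, where A = [[1,1],[0,1]] and B_α = [[1,0],[α,1]]. -/

import Mathlib

open Matrix

lemma upper_zpow (x : ℝ) (m : ℤ) : (!![1, x; 0, 1] : Matrix (Fin 2) (Fin 2) ℝ) ^ m = !![1, m * x; 0, 1] := by
  have hdet : IsUnit (!![1, x; 0, 1] : Matrix (Fin 2) (Fin 2) ℝ).det := by
    simp [Matrix.det_fin_two_of]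
  have hinv : (!![1, x; 0, 1] : Matrix (Fin 2) (Fin 2) ℝ)⁻¹ = !![1, -x; 0, 1] := by
    apply Matrix.inv_eq_right_inv
    ext i j
    fin_cases i <;> fin_cases j <;> simp [Matrix.mul_apply, Fin.sum_univ_two]
  induction m using Int.induction_on with
  | zero => rw [zpow_zero]; ext i j; fin_cases i <;> fin_cases j <;> simp [Matrix.one_apply]
  | succ k ih =>
    rw [Matrix.zpow_add_one hdet, ih]
    ext i j
    fin_cases i <;> fin_cases j <;> simp [Matrix.mul_apply, Fin.sum_univ_two] <;> push_cast <;> ring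
  | pred k ih =>
    rw [show (-(k:ℤ) - 1) = (-(k:ℤ)) - 1 by ring, Matrix.zpow_sub_one hdet, ih, hinv]
    ext i j
    fin_cases i <;> fin_cases j <;> simp [Matrix.mul_apply, Fin.sum_univ_two] <;> push_cast <;> ring

lemma lower_zpow (x : ℝ) (m : ℤ) : (!![1, 0; x, 1] : Matrix (Fin 2) (Fin 2) ℝ) ^ m = !![1, 0; m * x, 1] := by
  have hdet : IsUnit (!![1, 0; x, 1] : Matrix (Fin 2) (Fin 2) ℝ).det := by
    simp [Matrix.det_fin_two_of]
  have hinv : (!![1, 0; x, 1] : Matrix (Fin 2) (Fin 2) ℝ)⁻¹ = !![1, 0; -x, 1] := by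
    apply Matrix.inv_eq_right_inv
    ext i j
    fin_cases i <;> fin_cases j <;> simp [Matrix.mul_apply, Fin.sum_univ_two]
  induction m using Int.induction_on with
  | zero => rw [zpow_zero]; ext i j; fin_cases i <;> fin_cases j <;> simp [Matrix.one_apply]
  | succ k ih =>
    rw [Matrix.zpow_add_one hdet, ih]
    ext i j
    fin_cases i <;> fin_cases j <;> simp [Matrix.mul_apply, Fin.sum_univ_two] <;> push_cast <;> ring
  | pred k ih =>
    rw [show (-(k:ℤ) - 1) = (-(k:ℤ)) - 1 by ring, Matrix.zpow_sub_one hdet, ih, hinv]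
    ext i j
    fin_cases i <;> fin_cases j <;> simp [Matrix.mul_apply, Fin.sum_univ_two] <;> push_cast <;> ring

theorem orbit_test_second_family (n : ℤ) :
    let α : ℝ := 3 + (9 * (n : ℝ) + 5) / (3 * (2 * (n : ℝ) + 1) * (9 * (n : ℝ) + 4))
    let A : Matrix (Fin 2) (Fin 2) ℝ := !![1, 1; 0, 1]
    let B : Matrix (Fin 2) (Fin 2) ℝ := !![1, 0; α, 1]
    let M : Matrix (Fin 2) (Fin 2) ℝ :=
      B * A⁻¹ * B ^ (2 * n + 1) * A ^ (-(3 * (9 * n + 4) * (9 * n + 5)))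
    M 0 1 / M 1 1 = 1 / 2 := by
  intro α A B M
  have hAinv : A⁻¹ = !![1, -1; 0, 1] := by
    apply Matrix.inv_eq_right_inv
    ext i j
    fin_cases i <;> fin_cases j <;> simp [A, Matrix.mul_apply, Fin.sum_univ_two]
  have hB : B ^ (2 * n + 1) = !![1, 0; (2 * (n:ℝ) + 1) * α, 1] := by
    rw [show B = !![1, 0; α, 1] from rfl, lower_zpow]; push_cast; ring_nf
  have hA : A ^ (-(3 * (9 * n + 4) * (9 * n + 5))) = !![1, (-(3 * (9 * (n:ℝ) + 4) * (9 * (n:ℝ) + 5))); 0, 1] := by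
    rw [show A = !![1, 1; 0, 1] from rfl, upper_zpow]; push_cast; ring_nf
  have hM : M = !![1, -1; α, 1 - α] * !![1, 0; (2 * (n:ℝ) + 1) * α, 1] * !![1, (-(3 * (9 * (n:ℝ) + 4) * (9 * (n:ℝ) + 5))); 0, 1] := by
    rw [show M = B * A⁻¹ * B ^ (2 * n + 1) * A ^ (-(3 * (9 * n + 4) * (9 * n + 5))) from rfl,
      hAinv, hB, hA]
    congr 2
    ext i j
    fin_cases i <;> fin_cases j <;> simp [B, Matrix.mul_apply, Fin.sum_univ_two] <;> ring
  have h1 : (2 * (n:ℝ) + 1) ≠ 0 := by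
    intro h
    have : (2 * n + 1 : ℤ) = 0 := by exact_mod_cast h
    omega
  have h2 : (9 * (n:ℝ) + 4) ≠ 0 := by
    intro h
    have : (9 * n + 4 : ℤ) = 0 := by exact_mod_cast h
    omega
  have hα : α = 3 + (9 * (n:ℝ) + 5) / (3 * (2 * (n:ℝ) + 1) * (9 * (n:ℝ) + 4)) := rfl
  have hc : (9 * (9 * (n:ℝ) + 4)^2 * (2 * (n:ℝ) + 1)) ≠ 0 := by
    apply mul_ne_zero (mul_ne_zero (by norm_num) (pow_ne_zero _ h2)) h1
  have hq : M 0 1 = -(1 - (2 * (n:ℝ) + 1) * α) * (3 * (9 * (n:ℝ) + 4) * (9 * (n:ℝ) + 5)) - 1 := by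
    rw [hM]
    simp [Matrix.mul_apply, Fin.sum_univ_two]
    ring
  have hs : M 1 1 = -(α + (1 - α) * ((2 * (n:ℝ) + 1) * α)) * (3 * (9 * (n:ℝ) + 4) * (9 * (n:ℝ) + 5)) + (1 - α) := by
    rw [hM]
    simp [Matrix.mul_apply, Fin.sum_univ_two]
    ring
  have hq' : M 0 1 = 9 * (9 * (n:ℝ) + 4)^2 * (2 * (n:ℝ) + 1) := by
    rw [hq, hα]
    field_simp [show (n:ℝ) * 9 + 4 ≠ 0 by intro h; exact h2 (by linarith)]
    ring
  have hs' : M 1 1 = 2 * (9 * (9 * (n:ℝ) + 4)^2 * (2 * (n:ℝ) + 1)) := by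
    rw [hs, hα]
    field_simp [show (n:ℝ) * 2 + 1 ≠ 0 by intro h; exact h1 (by linarith)]
    ring
  rw [hq', hs', div_eq_div_iff (by exact mul_ne_zero two_ne_zero hc) two_ne_zero]
  ring
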